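/- If f(z) = Σ_{k=0}^∞ a_k z^k is holomorphic on the unit disk with |f| ≤ 1, then for all 0 ≤ r < 1: Σ_{k=1}^∞ |a_k| r^k + (1/(1+|a_0|) + r/(1−r)) Σ_{k=1}^∞ |a_k|² r^{2k} ≤ (r/(1−r)) (1 − |a_0|²). -/

import Mathlib

open Finset Filter Complex Topology
set_option maxHeartbeats 1000000

namespace RefinedBohr

noncomputable def om (K : ℕ) : ℂ := Complex.exp (2 * Real.pi * Complex.I / K)

lemma om_pow_K {K : ℕ} (hK : 0 < K) : om K ^ K = 1 := by
  rw [om, ← Complex.exp_nat_mul]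
  rw [mul_div_assoc']
  rw [mul_comm (K:ℂ), mul_div_assoc]
  rw [div_self (by exact_mod_cast hK.ne')]
  simpa using Complex.exp_two_pi_mul_I

lemma conj_om (K : ℕ) : (starRingEnd ℂ) (om K) = Complex.exp (-(2 * Real.pi * Complex.I / K)) := by
  rw [om, ← Complex.exp_conj]
  congr 1
  simp only [map_div₀, map_mul, Complex.conj_I, Complex.conj_natCast, Complex.conj_ofReal,
    map_ofNat]
  ring

lemma om_mul_conj (K : ℕ) : om K * (starRingEnd ℂ) (om K) = 1 := by
  rw [conj_om, om, ← Complex.exp_add]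
  simp

lemma conj_om_pow_K {K : ℕ} (hK : 0 < K) : ((starRingEnd ℂ) (om K)) ^ K = 1 := by
  have := om_pow_K hK
  have h : (om K * (starRingEnd ℂ) (om K)) ^ K = 1 := by rw [om_mul_conj]; simp
  rw [mul_pow, this, one_mul] at h
  exact h

lemma zeta_ne_one {K i j : ℕ} (hK : 0 < K) (hi : i < K) (hj : j < K) (hij : i ≠ j) :
    om K ^ i * ((starRingEnd ℂ) (om K)) ^ j ≠ 1 := by
  intro h
  rw [conj_om, om, ← Complex.exp_nat_mul, ← Complex.exp_nat_mul, ← Complex.exp_add] at h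
  rw [Complex.exp_eq_one_iff] at h
  obtain ⟨n, hn⟩ := h
  have hKne : (K:ℂ) ≠ 0 := by exact_mod_cast hK.ne'
  have h2 : (2 * (Real.pi:ℂ) * Complex.I) ≠ 0 := by
    simp [Real.pi_ne_zero, Complex.I_ne_zero]
  have h3 : ((i:ℂ) - j) * (2 * Real.pi * Complex.I) = ((n:ℂ) * K) * (2 * Real.pi * Complex.I) := by
    field_simp at hn
    linear_combination (2 * Real.pi * Complex.I) * hn
  have h4 : ((i:ℂ) - j) = (n:ℂ) * K := mul_right_cancel₀ h2 h3
  have hre : ((i:ℝ) - j) = (n:ℝ) * K := by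
    have := congrArg Complex.re h4
    simpa using this
  have hiR : (i:ℝ) < K := by exact_mod_cast hi
  have hjR : (j:ℝ) < K := by exact_mod_cast hj
  have hi0 : (0:ℝ) ≤ i := Nat.cast_nonneg i
  have hj0 : (0:ℝ) ≤ j := Nat.cast_nonneg j
  have hKpos : (0:ℝ) < K := by exact_mod_cast hK
  rcases eq_or_ne n 0 with rfl | hn0
  · have hij' : (i:ℝ) = j := by push_cast at hre; linarith
    exact hij (by exact_mod_cast hij')
  · have h1n : (1:ℝ) ≤ |(n:ℝ)| := by
      exact_mod_cast Int.one_le_abs (by exact_mod_cast hn0)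
    have : (K:ℝ) ≤ |(i:ℝ) - j| := by
      rw [hre, abs_mul, abs_of_pos hKpos]
      nlinarith
    have : |(i:ℝ) - j| < K := abs_sub_lt_iff.mpr ⟨by linarith, by linarith⟩
    linarith

lemma geom_sum_zeta {K i j : ℕ} (hK : 0 < K) (hi : i < K) (hj : j < K) :
    ∑ t ∈ range K, (om K ^ i * ((starRingEnd ℂ) (om K)) ^ j) ^ t
      = if i = j then (K:ℂ) else 0 := by
  rcases eq_or_ne i j with rfl | hij
  · simp only [if_pos rfl]
    have : om K ^ i * ((starRingEnd ℂ) (om K)) ^ i = 1 := by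
      rw [← mul_pow, om_mul_conj, one_pow]
    rw [this]
    simp
  · rw [if_neg hij]
    rw [geom_sum_eq (zeta_ne_one hK hi hj hij)]
    rw [mul_pow, ← pow_mul, ← pow_mul, mul_comm i K, mul_comm j K, pow_mul, pow_mul,
      om_pow_K hK, conj_om_pow_K hK]
    simp

/-- Discrete Parseval identity for polynomials sampled at K-th roots of unity. -/
lemma dparseval (p : ℕ → ℂ) {M K : ℕ} (hK : 0 < K) (hMK : M ≤ K) :
    ∑ t ∈ range K, Complex.normSq (∑ i ∈ range M, p i * (om K ^ t) ^ i)
      = K * ∑ i ∈ range M, Complex.normSq (p i) := by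
  have key : ∑ t ∈ range K, ((∑ i ∈ range M, p i * (om K ^ t) ^ i) *
      (starRingEnd ℂ) (∑ i ∈ range M, p i * (om K ^ t) ^ i))
      = (K:ℂ) * ∑ i ∈ range M, p i * (starRingEnd ℂ) (p i) := by
    have expand : ∀ t, (∑ i ∈ range M, p i * (om K ^ t) ^ i) *
        (starRingEnd ℂ) (∑ i ∈ range M, p i * (om K ^ t) ^ i)
        = ∑ i ∈ range M, ∑ j ∈ range M,
            p i * (starRingEnd ℂ) (p j) * ((om K ^ i * ((starRingEnd ℂ) (om K)) ^ j) ^ t) := by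
      intro t
      rw [map_sum, Finset.sum_mul_sum]
      apply Finset.sum_congr rfl; intro i _
      apply Finset.sum_congr rfl; intro j _
      rw [map_mul, map_pow, map_pow]
      rw [mul_pow]
      rw [← pow_mul, ← pow_mul, mul_comm t i, mul_comm t j, pow_mul, pow_mul]
      ring
    calc ∑ t ∈ range K, ((∑ i ∈ range M, p i * (om K ^ t) ^ i) *
          (starRingEnd ℂ) (∑ i ∈ range M, p i * (om K ^ t) ^ i))
        = ∑ t ∈ range K, ∑ i ∈ range M, ∑ j ∈ range M,
            p i * (starRingEnd ℂ) (p j) * ((om K ^ i * ((starRingEnd ℂ) (om K)) ^ j) ^ t) := by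
          exact Finset.sum_congr rfl fun t _ => expand t
      _ = ∑ i ∈ range M, ∑ j ∈ range M, ∑ t ∈ range K,
            p i * (starRingEnd ℂ) (p j) * ((om K ^ i * ((starRingEnd ℂ) (om K)) ^ j) ^ t) := by
          rw [Finset.sum_comm]
          apply Finset.sum_congr rfl; intro i _
          rw [Finset.sum_comm]
      _ = ∑ i ∈ range M, ∑ j ∈ range M,
            p i * (starRingEnd ℂ) (p j) * (if i = j then (K:ℂ) else 0) := by
          apply Finset.sum_congr rfl; intro i hi
          apply Finset.sum_congr rfl; intro j hj
          rw [← Finset.mul_sum, geom_sum_zeta hK (lt_of_lt_of_le (mem_range.mp hi) hMK)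
            (lt_of_lt_of_le (mem_range.mp hj) hMK)]
      _ = (K:ℂ) * ∑ i ∈ range M, p i * (starRingEnd ℂ) (p i) := by
          rw [Finset.mul_sum]
          apply Finset.sum_congr rfl; intro i hi
          simp_rw [mul_ite, mul_zero]
          rw [Finset.sum_ite_eq (range M) i (fun j => p i * (starRingEnd ℂ) (p j) * K)]
          rw [if_pos hi]; ring
  have : ∀ z : ℂ, z * (starRingEnd ℂ) z = (Complex.normSq z : ℂ) := fun z => Complex.mul_conj z
  simp_rw [this] at key
  exact_mod_cast key


lemma norm_om_pow (K t : ℕ) : ‖om K ^ t‖ = 1 := by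
  rw [norm_pow, om, Complex.norm_exp]
  have : (2 * Real.pi * Complex.I / K).re = 0 := by
    rcases Nat.eq_zero_or_pos K with rfl | hK
    · simp
    · rw [div_eq_mul_inv]
      simp [Complex.mul_re, Complex.mul_im]
  rw [this, Real.exp_zero, one_pow]

section Main

variable (f : ℂ → ℂ) (a : ℕ → ℂ)
variable (hf : ∀ z : ℂ, ‖z‖ < 1 → HasSum (fun k : ℕ => a k * z ^ k) (f z))
variable (hb : ∀ z : ℂ, ‖z‖ < 1 → ‖f z‖ ≤ 1)

include hf in
lemma summable_norm_coeff {ρ : ℝ} (hρ0 : 0 ≤ ρ) (hρ1 : ρ < 1) :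
    Summable (fun k => ‖a k‖ * ρ ^ k) := by
  obtain ⟨σ, hσ0, hρσ, hσ1⟩ : ∃ σ : ℝ, 0 < σ ∧ ρ < σ ∧ σ < 1 :=
    ⟨(1 + ρ) / 2, by linarith, by linarith, by linarith⟩
  have hz : ‖(σ : ℂ)‖ < 1 := by
    rw [Complex.norm_real, Real.norm_eq_abs, _root_.abs_of_pos hσ0]; exact hσ1
  have hs : Summable (fun k => a k * (σ:ℂ) ^ k) := (hf _ hz).summable
  have ht : Tendsto (fun k => ‖a k * (σ:ℂ) ^ k‖) atTop (nhds 0) := by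
    simpa using hs.tendsto_atTop_zero.norm
  obtain ⟨C, hC⟩ := ht.bddAbove_range
  have hCb : ∀ k, ‖a k‖ * σ ^ k ≤ C := by
    intro k
    have : ‖a k * (σ:ℂ) ^ k‖ ≤ C := hC (Set.mem_range_self k)
    rwa [norm_mul, norm_pow, Complex.norm_real, Real.norm_eq_abs, _root_.abs_of_pos hσ0] at this
  apply Summable.of_nonneg_of_le (fun k => by positivity)
    (f := fun k => C * (ρ/σ) ^ k)
  · intro k
    have h1 : ‖a k‖ * ρ ^ k = (‖a k‖ * σ ^ k) * (ρ/σ) ^ k := by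
      rw [div_pow, mul_assoc, mul_div_assoc']
      rw [mul_comm (σ ^ k), mul_div_assoc, div_self (by positivity), mul_one]
    rw [h1]
    have h2 : (0:ℝ) ≤ (ρ/σ)^k := by positivity
    exact mul_le_mul_of_nonneg_right (hCb k) h2
  · exact (summable_geometric_of_lt_one (by positivity) (by rw [div_lt_one hσ0]; exact hρσ)).mul_left C

include hf hb in
/-- Bessel-type inequality: selected squared coefficients of `f(ρ·)·q` are dominated by `‖q‖²`. -/
lemma bessel {ρ : ℝ} (hρ0 : 0 ≤ ρ) (hρ1 : ρ < 1)
    (v : ℕ → ℂ) (D : ℕ) (hv : ∀ j, D ≤ j → v j = 0) (S : Finset ℕ) :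
    ∑ i ∈ S, Complex.normSq (∑ kl ∈ antidiagonal i, (a kl.1 * (ρ:ℂ) ^ kl.1) * v kl.2)
      ≤ ∑ j ∈ range D, Complex.normSq (v j) := by
  set atil : ℕ → ℂ := fun k => a k * (ρ:ℂ) ^ k with hatil
  set W : ℕ → ℂ := fun i => ∑ kl ∈ antidiagonal i, atil kl.1 * v kl.2 with hW
  have hzu1 : ∀ u : ℂ, ‖u‖ = 1 → ‖(ρ:ℂ) * u‖ < 1 := by
    intro u hu
    rw [norm_mul, hu, mul_one, Complex.norm_real, Real.norm_eq_abs, _root_.abs_of_nonneg hρ0]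
    exact hρ1
  have hnorm_atil : ∀ k, ‖atil k‖ = ‖a k‖ * ρ ^ k := by
    intro k
    rw [hatil]
    rw [norm_mul, norm_pow, Complex.norm_real, Real.norm_eq_abs, _root_.abs_of_nonneg hρ0]
  have hsum_a : Summable (fun k => ‖atil k‖) := by
    simp_rw [hnorm_atil]; exact summable_norm_coeff f a hf hρ0 hρ1
  have hsum_v : Summable (fun j => ‖v j‖) :=
    summable_of_ne_finset_zero (s := range D)
      (fun j hj => by rw [hv j (by simpa using hj)]; simp)
  have hsum_W : Summable (fun i => ‖W i‖) :=
    summable_norm_sum_mul_antidiagonal_of_summable_norm hsum_a hsum_v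
  set B : ℝ := ∑ j ∈ range D, ‖v j‖ with hB
  set qq : ℂ → ℂ := fun u => ∑ j ∈ range D, v j * u ^ j with hqq
  -- evaluation identity
  have heval : ∀ u : ℂ, ‖u‖ = 1 → (∑' i, W i * u ^ i) = f ((ρ:ℂ) * u) * qq u := by
    intro u hu
    have hzu : ‖(ρ:ℂ) * u‖ < 1 := hzu1 u hu
    have hfs : HasSum (fun k => atil k * u ^ k) (f ((ρ:ℂ) * u)) := by
      have := hf _ hzu
      convert this using 2 with k
      rw [hatil]; rw [mul_pow]; ring
    have h1 : Summable fun k => ‖atil k * u ^ k‖ := by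
      simp_rw [norm_mul, norm_pow, hu, one_pow, mul_one]; exact hsum_a
    have h2 : Summable fun j => ‖v j * u ^ j‖ := by
      simp_rw [norm_mul, norm_pow, hu, one_pow, mul_one]; exact hsum_v
    have hprod := tsum_mul_tsum_eq_tsum_sum_antidiagonal_of_summable_norm h1 h2
    have hq' : (∑' j, v j * u ^ j) = qq u := by
      rw [hqq]
      exact tsum_eq_sum (fun j hj => by rw [hv j (by simpa using hj)]; simp)
    rw [hfs.tsum_eq, hq'] at hprod
    rw [hprod]
    apply tsum_congr
    intro n
    rw [hW]
    rw [Finset.sum_mul]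
    apply Finset.sum_congr rfl
    intro kl hkl
    have : kl.1 + kl.2 = n := by simpa using Finset.HasAntidiagonal.mem_antidiagonal.mp hkl
    rw [← this, pow_add]; ring
  -- tail
  set tail : ℕ → ℝ := fun N => ∑' i, ‖W (i + (N + 1))‖ with htail
  have htail0 : ∀ N, 0 ≤ tail N := fun N => tsum_nonneg (fun i => norm_nonneg _)
  have hqbound : ∀ u : ℂ, ‖u‖ = 1 → ‖qq u‖ ≤ B := by
    intro u hu
    rw [hqq, hB]
    refine (norm_sum_le _ _).trans (le_of_eq ?_)
    apply Finset.sum_congr rfl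
    intro j _
    rw [norm_mul, norm_pow, hu, one_pow, mul_one]
  -- truncated bound
  have htrunc : ∀ N, ∀ u : ℂ, ‖u‖ = 1 →
      ‖∑ i ∈ range (N+1), W i * u ^ i‖ ≤ ‖qq u‖ + tail N := by
    intro N u hu
    have hsumWu : Summable (fun i => W i * u ^ i) := by
      apply Summable.of_norm
      simp_rw [norm_mul, norm_pow, hu, one_pow, mul_one]
      exact hsum_W
    have hsplit := Summable.sum_add_tsum_nat_add (f := fun i => W i * u ^ i) (N+1) hsumWu
    have : ∑ i ∈ range (N+1), W i * u ^ i
        = (∑' i, W i * u ^ i) - ∑' i, W (i + (N+1)) * u ^ (i + (N+1)) := by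
      rw [← hsplit]; ring
    rw [this]
    refine (norm_sub_le _ _).trans ?_
    gcongr
    · rw [heval u hu, norm_mul]
      have := hb _ (hzu1 u hu)
      calc ‖f ((ρ:ℂ)*u)‖ * ‖qq u‖ ≤ 1 * ‖qq u‖ := by gcongr
        _ = ‖qq u‖ := one_mul _
    · have he : (fun i => ‖W (i + (N+1)) * u ^ (i + (N+1))‖) = fun i => ‖W (i + (N+1))‖ := by
        funext i; rw [norm_mul, norm_pow, hu, one_pow, mul_one]
      have hs2 : Summable fun i => ‖W (i + (N+1))‖ :=
        (summable_nat_add_iff (f := fun i => ‖W i‖) (N+1)).mpr hsum_W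
      rw [htail]
      refine (norm_tsum_le_tsum_norm ?_).trans (le_of_eq ?_)
      · rw [he]; exact hs2
      · rw [he]
  -- per-N bound
  have hperN : ∀ N, ∑ i ∈ range (N+1), Complex.normSq (W i)
      ≤ (∑ j ∈ range D, Complex.normSq (v j)) + tail N * (2 * B + tail N) := by
    intro N
    set K : ℕ := max (N+1) D with hK
    have hKpos : 0 < K := lt_of_lt_of_le (Nat.succ_pos N) (le_max_left _ _)
    have hP1 := dparseval W (M := N+1) (K := K) hKpos (le_max_left _ _)
    have hP2 := dparseval v (M := D) (K := K) hKpos (le_max_right _ _)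
    have hpt : ∀ t, Complex.normSq (∑ i ∈ range (N+1), W i * (om K ^ t) ^ i)
        ≤ Complex.normSq (qq (om K ^ t)) + tail N * (2 * B + tail N) := by
      intro t
      have hu := norm_om_pow K t
      have h1 := htrunc N _ hu
      have h2 := hqbound _ hu
      have hnn : (0:ℝ) ≤ ‖qq (om K ^ t)‖ := norm_nonneg _
      have e1 : Complex.normSq (∑ i ∈ range (N+1), W i * (om K ^ t) ^ i)
          = ‖∑ i ∈ range (N+1), W i * (om K ^ t) ^ i‖^2 := by
        rw [Complex.sq_norm]
      have e2 : Complex.normSq (qq (om K ^ t)) = ‖qq (om K ^ t)‖^2 := by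
        rw [Complex.sq_norm]
      rw [e1, e2]
      nlinarith [norm_nonneg (∑ i ∈ range (N+1), W i * (om K ^ t) ^ i), htail0 N]
    have hsumt : ∑ t ∈ range K, Complex.normSq (∑ i ∈ range (N+1), W i * (om K ^ t) ^ i)
        ≤ ∑ t ∈ range K, (Complex.normSq (qq (om K ^ t)) + tail N * (2 * B + tail N)) :=
      Finset.sum_le_sum (fun t _ => hpt t)
    rw [hP1] at hsumt
    rw [Finset.sum_add_distrib, Finset.sum_const, card_range] at hsumt
    have : ∑ t ∈ range K, Complex.normSq (qq (om K ^ t))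
        = K * ∑ j ∈ range D, Complex.normSq (v j) := hP2
    rw [this] at hsumt
    have hKR : (0:ℝ) < K := by exact_mod_cast hKpos
    calc ∑ i ∈ range (N+1), Complex.normSq (W i)
        = (K * ∑ i ∈ range (N+1), Complex.normSq (W i)) / K := by
          field_simp
      _ ≤ (K * ∑ j ∈ range D, Complex.normSq (v j) + K • (tail N * (2*B + tail N))) / K := by
          apply div_le_div_of_nonneg_right hsumt hKR.le |>.trans_eq rfl
      _ = (∑ j ∈ range D, Complex.normSq (v j)) + tail N * (2 * B + tail N) := by
          rw [nsmul_eq_mul]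
          field_simp
  -- pass to the limit
  have htail_lim : Tendsto tail atTop (nhds 0) := by
    have h0 : Tendsto (fun M => ∑' i, ‖W (i + M)‖) atTop (nhds 0) :=
      tendsto_sum_nat_add (fun n => ‖W n‖)
    have : tail = (fun M => ∑' i, ‖W (i + M)‖) ∘ (fun N => N + 1) := rfl
    rw [this]
    exact h0.comp (tendsto_add_atTop_nat 1)
  have hlim : Tendsto (fun N => (∑ j ∈ range D, Complex.normSq (v j)) + tail N * (2 * B + tail N))
      atTop (nhds ((∑ j ∈ range D, Complex.normSq (v j)) + 0 * (2 * B + 0))) := by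
    apply Tendsto.add tendsto_const_nhds
    exact Tendsto.mul htail_lim (Tendsto.add tendsto_const_nhds htail_lim)
  rw [zero_mul, add_zero] at hlim
  apply ge_of_tendsto hlim
  filter_upwards [eventually_ge_atTop (S.sup id)] with N hN
  have hsub : S ⊆ range (N+1) := by
    intro i hi
    rw [mem_range]
    exact lt_of_le_of_lt (le_trans (Finset.le_sup (f := id) hi) hN) (Nat.lt_succ_self N)
  calc ∑ i ∈ S, Complex.normSq (W i) ≤ ∑ i ∈ range (N+1), Complex.normSq (W i) :=
        Finset.sum_le_sum_of_subset_of_nonneg hsub (fun i _ _ => Complex.normSq_nonneg _)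
    _ ≤ _ := hperN N

end Main

noncomputable def eps (z : ℂ) : ℂ := if z = 0 then 1 else z / (‖z‖ : ℝ)

lemma norm_eps (z : ℂ) : ‖eps z‖ = 1 := by
  rw [eps]
  split_ifs with h
  · simp
  · rw [norm_div, Complex.norm_real, Real.norm_eq_abs, _root_.abs_of_nonneg (norm_nonneg z),
      div_self (norm_ne_zero_iff.mpr h)]

lemma norm_add_eps (z : ℂ) (x : ℝ) (hx : 0 ≤ x) : ‖z + eps z * x‖ = ‖z‖ + x := by
  rw [eps]
  split_ifs with h
  · subst h
    simp [Complex.norm_real, Real.norm_eq_abs, _root_.abs_of_nonneg hx]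
  · have hz : (‖z‖:ℝ) ≠ 0 := norm_ne_zero_iff.mpr h
    have h1 : z + z / ((‖z‖:ℝ):ℂ) * (x:ℂ) = z * (1 + (x:ℂ) / ((‖z‖:ℝ):ℂ)) := by ring
    rw [h1, norm_mul]
    have h2 : ‖1 + ((x:ℝ):ℂ) / ((‖z‖:ℝ):ℂ)‖ = 1 + x/‖z‖ := by
      rw [show (1:ℂ) + ((x:ℝ):ℂ) / ((‖z‖:ℝ):ℂ) = (((1 + x/‖z‖ : ℝ)):ℂ) by push_cast; ring]
      rw [Complex.norm_real, Real.norm_eq_abs, _root_.abs_of_nonneg (by positivity)]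
    rw [h2]
    have hz' : ‖z‖ ≠ 0 := hz
    field_simp

lemma odd_algebra (cn P : ℝ) (hcn : 0 ≤ cn) (hP : 0 ≤ P)
    (H : ∀ β : ℝ, 0 ≤ β → P + (cn + β*P)^2 ≤ 1 + β^2*P) : cn + P ≤ 1 := by
  have h0 := H 0 le_rfl
  have h0' : P + cn^2 ≤ 1 := by nlinarith [h0]
  set X : ℝ := 1 - P with hX
  have hX0 : 0 ≤ X := by nlinarith
  rcases eq_or_lt_of_le hX0 with hXeq | hXpos
  · have hcn0 : cn = 0 := by nlinarith
    nlinarith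
  · have hx := H (cn/X) (by positivity)
    have hkey : cn + cn/X*P = cn/X := by
      field_simp
      linear_combination cn * hX
    rw [hkey] at hx
    have l1 : (cn/X)^2 * X^2 = cn^2 := by field_simp
    have l2 : (cn/X)^2 * P * X^2 = cn^2 * P := by
      field_simp
      try ring
    have hx2 := mul_le_mul_of_nonneg_right hx (by positivity : (0:ℝ) ≤ X^2)
    rw [add_mul, add_mul, one_mul, l1, l2] at hx2
    have hx4 : P*X^2 + cn^2 ≤ X^2 + cn^2*P := hx2
    have hfin : cn^2 ≤ X^2 := by
      by_contra hc
      push_neg at hc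
      nlinarith [hx4, hXpos]
    have : cn ≤ X := by
      by_contra hc
      push_neg at hc
      nlinarith [hfin, hcn, hX0]
    linarith



lemma sum_range_ite_le {M : Type*} [AddCommMonoid M] (x : ℕ → M) (m N : ℕ) (h : m < N) :
    ∑ k ∈ range N, (if k ≤ m then x k else 0) = ∑ k ∈ range (m+1), x k := by
  have hsub : range (m+1) ⊆ range N := Finset.range_subset_range.mpr (by omega)
  rw [← Finset.sum_subset hsub (fun k hk hk' => by
    rw [if_neg (fun hc => hk' (mem_range.mpr (Nat.lt_succ_of_le hc)))])]
  exact Finset.sum_congr rfl (fun k hk => if_pos (Nat.lt_succ_iff.mp (mem_range.mp hk)))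

lemma sum_range_reflect_ite (x : ℕ → ℝ) (m n : ℕ) (hmn : m < n) :
    ∑ j ∈ range (n+1), (if m+1 ≤ j ∧ j ≤ n then x (n-j) else 0) = ∑ k ∈ range (n-m), x k := by
  have hpt : ∀ j ∈ range (n+1), (if m+1 ≤ j ∧ j ≤ n then x (n-j) else 0)
      = (if n - j ≤ n-m-1 then x (n-j) else 0) := by
    intro j hj
    have hj' : j < n + 1 := mem_range.mp hj
    by_cases hc : m+1 ≤ j ∧ j ≤ n
    · rw [if_pos hc, if_pos (show n - j ≤ n-m-1 by omega)]
    · rw [if_neg hc, if_neg (show ¬ (n - j ≤ n-m-1) by omega)]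
  rw [Finset.sum_congr rfl hpt]
  have hrefl := Finset.sum_range_reflect (fun k => if k ≤ n-m-1 then x k else 0) (n+1)
  simp only [Nat.add_sub_cancel] at hrefl
  rw [hrefl, sum_range_ite_le x (n-m-1) (n+1) (by omega)]
  rw [show n-m-1+1 = n-m by omega]

lemma sq_le_one_of_le_one {x : ℝ} (hx : 0 ≤ x) (h : x^2 ≤ 1) : x ≤ 1 := by nlinarith


def atl (a : ℕ → ℂ) (ρ : ℝ) : ℕ → ℂ := fun k => a k * (ρ:ℂ)^k

lemma atl_norm (a : ℕ → ℂ) {ρ : ℝ} (hρ0 : 0 ≤ ρ) (k : ℕ) :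
    ‖atl a ρ k‖ = ‖a k‖ * ρ ^ k := by
  rw [atl, norm_mul, norm_pow, Complex.norm_real, Real.norm_eq_abs, _root_.abs_of_nonneg hρ0]

lemma atl_nsq (a : ℕ → ℂ) {ρ : ℝ} (hρ0 : 0 ≤ ρ) (k : ℕ) :
    Complex.normSq (atl a ρ k) = (‖a k‖ * ρ^k)^2 := by
  rw [← atl_norm a hρ0, Complex.sq_norm]

/-- test vector: delta at 0 plus `c`-scaled reflected conjugate block plus `d`-scaled middle spike. -/
noncomputable def tv (w : ℕ → ℂ) (m n mid : ℕ) (c d : ℂ) : ℕ → ℂ := fun j =>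
  (if j = 0 then 1 else 0) + c * (if m+1 ≤ j ∧ j ≤ n then (starRingEnd ℂ) (w (n-j)) else 0)
    + d * (if j = mid then (starRingEnd ℂ) (w mid) else 0)

lemma tv_eval0 (w : ℕ → ℂ) (m n mid : ℕ) (c d : ℂ) (hmid : mid ≠ 0) :
    tv w m n mid c d 0 = 1 := by
  rw [tv]
  rw [if_pos rfl, if_neg (by omega), if_neg (by omega), mul_zero, mul_zero, add_zero, add_zero]

lemma tv_eval_out (w : ℕ → ℂ) (m n mid : ℕ) (c d : ℂ) {j : ℕ} (h1 : j ≠ 0)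
    (h2 : ¬ (m+1 ≤ j ∧ j ≤ n)) (h3 : j ≠ mid) :
    tv w m n mid c d j = 0 := by
  rw [tv, if_neg h1, if_neg h2, if_neg h3, mul_zero, mul_zero, add_zero, add_zero]

lemma tv_eval_in (w : ℕ → ℂ) (m n mid : ℕ) (c d : ℂ) {j : ℕ} (h1 : j ≠ 0)
    (h2 : m+1 ≤ j ∧ j ≤ n) (h3 : j ≠ mid) :
    tv w m n mid c d j = c * (starRingEnd ℂ) (w (n-j)) := by
  rw [tv, if_neg h1, if_pos h2, if_neg h3, mul_zero, add_zero, zero_add]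

lemma tv_eval_mid (w : ℕ → ℂ) (m n mid : ℕ) (c d : ℂ) {j : ℕ} (h1 : j ≠ 0)
    (h2 : ¬ (m+1 ≤ j ∧ j ≤ n)) (h3 : j = mid) :
    tv w m n mid c d j = d * (starRingEnd ℂ) (w mid) := by
  rw [tv, if_neg h1, if_neg h2, if_pos h3, mul_zero, add_zero, zero_add]

lemma conv_repr (a : ℕ → ℂ) (ρ : ℝ) (v : ℕ → ℂ) (i : ℕ) :
    (∑ kl ∈ antidiagonal i, (a kl.1 * (ρ:ℂ) ^ kl.1) * v kl.2)
      = ∑ k ∈ range (i+1), atl a ρ k * v (i - k) := by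
  rw [Finset.Nat.sum_antidiagonal_eq_sum_range_succ_mk]
  exact Finset.sum_congr rfl (fun k _ => by rw [atl])

lemma normSq_eps_mul (z w : ℂ) : Complex.normSq (eps z * w) = Complex.normSq w := by
  rw [Complex.normSq_mul]
  have : Complex.normSq (eps z) = 1 := by
    rw [← Complex.sq_norm, norm_eps, one_pow]
  rw [this, one_mul]

lemma coeffC_odd (f : ℂ → ℂ) (a : ℕ → ℂ)
    (hf : ∀ z : ℂ, ‖z‖ < 1 → HasSum (fun k : ℕ => a k * z ^ k) (f z))
    (hb : ∀ z : ℂ, ‖z‖ < 1 → ‖f z‖ ≤ 1) {ρ : ℝ} (hρ0 : 0 ≤ ρ) (hρ1 : ρ < 1) (m : ℕ) :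
    ‖a (2*m+1)‖ * ρ^(2*m+1) + ∑ k ∈ range (m+1), (‖a k‖ * ρ^k)^2 ≤ 1 := by
  set w : ℕ → ℂ := atl a ρ with hw
  set n : ℕ := 2*m+1 with hn
  set P : ℝ := ∑ k ∈ range (m+1), Complex.normSq (w k) with hP
  have hPnn : 0 ≤ P := Finset.sum_nonneg (fun k _ => Complex.normSq_nonneg _)
  have hmain : ∀ β : ℝ, 0 ≤ β → P + (‖w n‖ + β*P)^2 ≤ 1 + β^2*P := by
    intro β hβ
    set ε : ℂ := eps (w n) with hε
    set v : ℕ → ℂ := tv w m n 0 ((β:ℂ) * ε) 0 with hv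
    have hveq : ∀ j, v j = (if j = 0 then 1 else 0)
        + ((β:ℂ) * ε) * (if m+1 ≤ j ∧ j ≤ n then (starRingEnd ℂ) (w (n-j)) else 0) := by
      intro j
      rw [hv, tv, zero_mul, add_zero]
    have hvD : ∀ j, n+1 ≤ j → v j = 0 := by
      intro j hj
      rw [hveq j, if_neg (by omega), if_neg (by omega), mul_zero, add_zero]
    have hBes := bessel f a hf hb hρ0 hρ1 v (n+1) hvD (range (m+1) ∪ {n})
    have hWrow : ∀ i, i ≤ m →
        (∑ kl ∈ antidiagonal i, (a kl.1 * (ρ:ℂ) ^ kl.1) * v kl.2) = w i := by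
      intro i hi
      rw [conv_repr]
      have hzero : ∀ k ∈ range (i+1), k ≠ i → atl a ρ k * v (i - k) = 0 := by
        intro k hk hki
        have hk' : k < i + 1 := mem_range.mp hk
        rw [hveq, if_neg (show ¬ (i - k = 0) by omega),
          if_neg (show ¬ (m+1 ≤ i - k ∧ i - k ≤ n) by omega), mul_zero, add_zero, mul_zero]
      rw [Finset.sum_eq_single_of_mem i (self_mem_range_succ i) hzero]
      rw [hveq, Nat.sub_self, if_pos rfl, if_neg (show ¬ (m+1 ≤ 0 ∧ (0:ℕ) ≤ n) by omega),
        mul_zero, add_zero, mul_one, hw]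
    have hWn : (∑ kl ∈ antidiagonal n, (a kl.1 * (ρ:ℂ) ^ kl.1) * v kl.2)
        = w n + (β:ℂ) * ε * ((P:ℝ):ℂ) := by
      rw [conv_repr]
      have hsplit : ∀ k ∈ range (n+1), atl a ρ k * v (n - k)
          = (if k = n then w n else 0)
            + (β:ℂ) * ε * (if k ≤ m then ((Complex.normSq (w k) : ℝ) : ℂ) else 0) := by
        intro k hk
        have hk' : k < n + 1 := mem_range.mp hk
        by_cases hkn : k = n
        · rw [hveq, if_pos (show n - k = 0 by omega),
            if_neg (show ¬ (m+1 ≤ n - k ∧ n - k ≤ n) by omega), mul_zero, add_zero, mul_one,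
            if_pos hkn, if_neg (show ¬ (k ≤ m) by omega), mul_zero, add_zero, hkn, hw]
        · by_cases hkm : k ≤ m
          · rw [hveq, if_neg (show ¬ (n - k = 0) by omega),
              if_pos (show m+1 ≤ n - k ∧ n - k ≤ n by omega), zero_add,
              show n - (n - k) = k by omega, if_neg hkn, if_pos hkm, zero_add]
            rw [← hw, mul_left_comm (w k), Complex.mul_conj]
          · rw [hveq, if_neg (show ¬ (n - k = 0) by omega),
              if_neg (show ¬ (m+1 ≤ n - k ∧ n - k ≤ n) by omega), mul_zero, add_zero, mul_zero,
              if_neg hkn, if_neg hkm, mul_zero, add_zero]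
      rw [Finset.sum_congr rfl hsplit, Finset.sum_add_distrib]
      congr 1
      · rw [Finset.sum_ite_eq' (range (n+1)) n (fun _ => w n)]
        exact if_pos (self_mem_range_succ n)
      · rw [← Finset.mul_sum]
        congr 1
        rw [sum_range_ite_le (fun k => ((Complex.normSq (w k) : ℝ) : ℂ)) m (n+1) (by omega)]
        rw [hP]
        push_cast
        rfl
    have hsplitS : ∑ i ∈ range (m+1) ∪ {n},
          Complex.normSq (∑ kl ∈ antidiagonal i, (a kl.1 * (ρ:ℂ) ^ kl.1) * v kl.2)
        = ∑ i ∈ range (m+1),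
            Complex.normSq (∑ kl ∈ antidiagonal i, (a kl.1 * (ρ:ℂ) ^ kl.1) * v kl.2)
          + Complex.normSq (∑ kl ∈ antidiagonal n, (a kl.1 * (ρ:ℂ) ^ kl.1) * v kl.2) := by
      rw [Finset.sum_union (by
        simp only [Finset.disjoint_singleton_right, mem_range]
        omega)]
      rw [Finset.sum_singleton]
    have hLHS1 : ∑ i ∈ range (m+1),
        Complex.normSq (∑ kl ∈ antidiagonal i, (a kl.1 * (ρ:ℂ) ^ kl.1) * v kl.2) = P := by
      rw [hP]
      apply Finset.sum_congr rfl
      intro i hi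
      rw [hWrow i (Nat.lt_succ_iff.mp (mem_range.mp hi))]
    have hWnSq : Complex.normSq (∑ kl ∈ antidiagonal n, (a kl.1 * (ρ:ℂ) ^ kl.1) * v kl.2)
        = (‖w n‖ + β*P)^2 := by
      rw [hWn]
      have heq : w n + (β:ℂ) * ε * ((P:ℝ):ℂ) = w n + eps (w n) * (((β*P : ℝ)):ℂ) := by
        rw [hε]; push_cast; ring
      rw [heq, ← Complex.sq_norm, norm_add_eps _ _ (by positivity)]
    have hRHS : ∑ j ∈ range (n+1), Complex.normSq (v j) = 1 + β^2 * P := by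
      have hpt : ∀ j ∈ range (n+1), Complex.normSq (v j)
          = (if j = 0 then (1:ℝ) else 0)
            + β^2 * (if m+1 ≤ j ∧ j ≤ n then Complex.normSq (w (n-j)) else 0) := by
        intro j hj
        have hj' : j < n + 1 := mem_range.mp hj
        by_cases hj0 : j = 0
        · rw [hveq, if_pos hj0, if_neg (show ¬ (m+1 ≤ j ∧ j ≤ n) by omega), mul_zero, add_zero,
            if_pos hj0, if_neg (show ¬ (m+1 ≤ j ∧ j ≤ n) by omega), mul_zero, add_zero]
          exact Complex.normSq_one
        · by_cases hjm : m+1 ≤ j ∧ j ≤ n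
          · rw [hveq, if_neg hj0, if_pos hjm, zero_add, if_neg hj0, if_pos hjm, zero_add]
            rw [Complex.normSq_mul, Complex.normSq_mul, Complex.normSq_conj,
              Complex.normSq_ofReal]
            have hepsSq : Complex.normSq ε = 1 := by
              rw [hε, ← Complex.sq_norm, norm_eps, one_pow]
            rw [hepsSq]
            ring
          · rw [hveq, if_neg hj0, if_neg hjm, mul_zero, add_zero, if_neg hj0, if_neg hjm,
              mul_zero, add_zero]
            exact Complex.normSq_zero
      rw [Finset.sum_congr rfl hpt, Finset.sum_add_distrib]
      congr 1
      · rw [Finset.sum_ite_eq' (range (n+1)) 0 (fun _ => (1:ℝ))]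
        exact if_pos (mem_range.mpr (by omega))
      · rw [← Finset.mul_sum]
        congr 1
        rw [sum_range_reflect_ite (fun k => Complex.normSq (w k)) m n (by omega)]
        rw [hP, show n - m = m + 1 by omega]
    rw [hsplitS, hLHS1, hWnSq, hRHS] at hBes
    linarith [hBes]
  have hfin := odd_algebra (‖w n‖) P (norm_nonneg _) hPnn hmain
  calc ‖a n‖ * ρ^n + ∑ k ∈ range (m+1), (‖a k‖ * ρ^k)^2
      = ‖w n‖ + P := by
        rw [hw, atl_norm a hρ0, hP]
        congr 1
        refine Finset.sum_congr rfl (fun k _ => ?_)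
        rw [hw, atl_nsq a hρ0]
    _ ≤ 1 := hfin

lemma coeffC_even (f : ℂ → ℂ) (a : ℕ → ℂ)
    (hf : ∀ z : ℂ, ‖z‖ < 1 → HasSum (fun k : ℕ => a k * z ^ k) (f z))
    (hb : ∀ z : ℂ, ‖z‖ < 1 → ‖f z‖ ≤ 1) {ρ : ℝ} (hρ0 : 0 ≤ ρ) (hρ1 : ρ < 1) (m : ℕ) (hm : 1 ≤ m) :
    ‖a (2*m)‖ * ρ^(2*m) + ∑ k ∈ range m, (‖a k‖ * ρ^k)^2
      + (‖a m‖ * ρ^m)^2 / (1 + ‖a 0‖) ≤ 1 := by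
  set w : ℕ → ℂ := atl a ρ with hw
  set n : ℕ := 2*m with hn
  have hmn : m < n := by omega
  set a0 : ℝ := ‖a 0‖ with ha0
  have ha0nn : 0 ≤ a0 := norm_nonneg _
  set e : ℝ := 1 / (1 + a0) with he
  have hepos : 0 < e := by rw [he]; positivity
  have he1 : 1 - e * a0 = e := by
    rw [he]; field_simp; ring
  set Q : ℝ := ∑ k ∈ range m, Complex.normSq (w k) with hQ
  have hQnn : 0 ≤ Q := Finset.sum_nonneg (fun k _ => Complex.normSq_nonneg _)
  set γ : ℝ := Complex.normSq (w m) with hγ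
  have hγnn : 0 ≤ γ := Complex.normSq_nonneg _
  set ε : ℂ := eps (w n) with hε
  have hepsn : ‖ε‖ = 1 := by rw [hε]; exact norm_eps _
  set v : ℕ → ℂ := tv w m n m ε (ε * (e:ℝ)) with hv
  have hveq : ∀ j, v j = (if j = 0 then 1 else 0)
      + ε * (if m+1 ≤ j ∧ j ≤ n then (starRingEnd ℂ) (w (n-j)) else 0)
      + ε * (e:ℝ) * (if j = m then (starRingEnd ℂ) (w m) else 0) := by
    intro j
    rw [hv, tv]
  have hvD : ∀ j, n+1 ≤ j → v j = 0 := by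
    intro j hj
    rw [hveq j, if_neg (by omega), if_neg (by omega), if_neg (by omega), mul_zero, mul_zero,
      add_zero, add_zero]
  have hBes := bessel f a hf hb hρ0 hρ1 v (n+1) hvD (range (m+1) ∪ {n})
  have hWrow : ∀ i, i < m →
      (∑ kl ∈ antidiagonal i, (a kl.1 * (ρ:ℂ) ^ kl.1) * v kl.2) = w i := by
    intro i hi
    rw [conv_repr]
    have hzero : ∀ k ∈ range (i+1), k ≠ i → atl a ρ k * v (i - k) = 0 := by
      intro k hk hki
      have hk' : k < i + 1 := mem_range.mp hk
      rw [hveq, if_neg (show ¬ (i - k = 0) by omega),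
        if_neg (show ¬ (m+1 ≤ i - k ∧ i - k ≤ n) by omega),
        if_neg (show ¬ (i - k = m) by omega), mul_zero, mul_zero, add_zero, add_zero, mul_zero]
    rw [Finset.sum_eq_single_of_mem i (self_mem_range_succ i) hzero]
    rw [hveq, Nat.sub_self, if_pos rfl, if_neg (show ¬ (m+1 ≤ 0 ∧ (0:ℕ) ≤ n) by omega),
      if_neg (show ¬ ((0:ℕ) = m) by omega), mul_zero, mul_zero, add_zero, add_zero, mul_one, hw]
  have hWm : (∑ kl ∈ antidiagonal m, (a kl.1 * (ρ:ℂ) ^ kl.1) * v kl.2)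
      = w m + ε * (e:ℝ) * (w 0 * (starRingEnd ℂ) (w m)) := by
    rw [conv_repr]
    have hsplit : ∀ k ∈ range (m+1), atl a ρ k * v (m - k)
        = (if k = m then w m else 0)
          + (if k = 0 then ε * (e:ℝ) * (w 0 * (starRingEnd ℂ) (w m)) else 0) := by
      intro k hk
      have hk' : k < m + 1 := mem_range.mp hk
      by_cases hkm : k = m
      · rw [hveq, if_pos (show m - k = 0 by omega),
          if_neg (show ¬ (m+1 ≤ m - k ∧ m - k ≤ n) by omega),
          if_neg (show ¬ (m - k = m) by omega), mul_zero, mul_zero, add_zero, add_zero, mul_one,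
          if_pos hkm, if_neg (show ¬ (k = 0) by omega), add_zero, hkm, hw]
      · by_cases hk0 : k = 0
        · rw [hveq, if_neg (show ¬ (m - k = 0) by omega),
            if_neg (show ¬ (m+1 ≤ m - k ∧ m - k ≤ n) by omega),
            if_pos (show m - k = m by omega), mul_zero, add_zero, zero_add,
            if_neg hkm, if_pos hk0, zero_add, hk0, hw]
          ring
        · rw [hveq, if_neg (show ¬ (m - k = 0) by omega),
            if_neg (show ¬ (m+1 ≤ m - k ∧ m - k ≤ n) by omega),
            if_neg (show ¬ (m - k = m) by omega), mul_zero, mul_zero, add_zero, add_zero,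
            mul_zero, if_neg hkm, if_neg hk0, add_zero]
    rw [Finset.sum_congr rfl hsplit, Finset.sum_add_distrib]
    congr 1
    · rw [Finset.sum_ite_eq' (range (m+1)) m (fun _ => w m)]
      exact if_pos (self_mem_range_succ m)
    · rw [Finset.sum_ite_eq' (range (m+1)) 0
        (fun _ => ε * (e:ℝ) * (w 0 * (starRingEnd ℂ) (w m)))]
      exact if_pos (mem_range.mpr (by omega))
  have hWn : (∑ kl ∈ antidiagonal n, (a kl.1 * (ρ:ℂ) ^ kl.1) * v kl.2)
      = w n + ε * (((Q + e * γ : ℝ)):ℂ) := by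
    rw [conv_repr]
    have hsplit : ∀ k ∈ range (n+1), atl a ρ k * v (n - k)
        = (if k = n then w n else 0)
          + (ε * (if k ≤ m-1 then ((Complex.normSq (w k) : ℝ) : ℂ) else 0)
            + ε * (if k = m then ((e * Complex.normSq (w m) : ℝ) : ℂ) else 0)) := by
      intro k hk
      have hk' : k < n + 1 := mem_range.mp hk
      by_cases hkn : k = n
      · rw [hveq, if_pos (show n - k = 0 by omega),
          if_neg (show ¬ (m+1 ≤ n - k ∧ n - k ≤ n) by omega),
          if_neg (show ¬ (n - k = m) by omega),
          if_pos hkn, if_neg (show ¬ (k ≤ m-1) by omega), if_neg (show ¬ (k = m) by omega),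
          hkn, hw]
        simp only [mul_zero, mul_one, add_zero, zero_add]
      · by_cases hkm : k ≤ m-1
        · rw [hveq, if_neg (show ¬ (n - k = 0) by omega),
            if_pos (show m+1 ≤ n - k ∧ n - k ≤ n by omega),
            if_neg (show ¬ (n - k = m) by omega),
            show n - (n - k) = k by omega, if_neg hkn, if_pos hkm,
            if_neg (show ¬ (k = m) by omega), ← hw]
          simp only [mul_zero, mul_one, add_zero, zero_add]
          linear_combination ε * Complex.mul_conj (w k)
        · by_cases hkm2 : k = m
          · rw [hveq, if_neg (show ¬ (n - k = 0) by omega),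
              if_neg (show ¬ (m+1 ≤ n - k ∧ n - k ≤ n) by omega),
              if_pos (show n - k = m by omega),
              if_neg hkn, if_neg (show ¬ (k ≤ m-1) by omega), if_pos hkm2, hkm2, ← hw]
            simp only [mul_zero, mul_one, add_zero, zero_add]
            push_cast
            linear_combination ε * (e:ℂ) * Complex.mul_conj (w m)
          · rw [hveq, if_neg (show ¬ (n - k = 0) by omega),
              if_neg (show ¬ (m+1 ≤ n - k ∧ n - k ≤ n) by omega),
              if_neg (show ¬ (n - k = m) by omega),
              if_neg hkn, if_neg hkm, if_neg hkm2]
            simp only [mul_zero, mul_one, add_zero, zero_add]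
    rw [Finset.sum_congr rfl hsplit, Finset.sum_add_distrib]
    congr 1
    · rw [Finset.sum_ite_eq' (range (n+1)) n (fun _ => w n)]
      exact if_pos (self_mem_range_succ n)
    · rw [Finset.sum_add_distrib, ← Finset.mul_sum, ← Finset.mul_sum]
      rw [sum_range_ite_le (fun k => ((Complex.normSq (w k) : ℝ) : ℂ)) (m-1) (n+1) (by omega)]
      rw [Finset.sum_ite_eq' (range (n+1)) m (fun _ => ((e * Complex.normSq (w m) : ℝ) : ℂ))]
      rw [if_pos (mem_range.mpr (by omega))]
      rw [show m - 1 + 1 = m by omega]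
      rw [← mul_add]
      congr 1
      rw [hQ, hγ]
      push_cast
      ring
  have hsplitS : ∑ i ∈ range (m+1) ∪ {n},
        Complex.normSq (∑ kl ∈ antidiagonal i, (a kl.1 * (ρ:ℂ) ^ kl.1) * v kl.2)
      = ∑ i ∈ range m,
          Complex.normSq (∑ kl ∈ antidiagonal i, (a kl.1 * (ρ:ℂ) ^ kl.1) * v kl.2)
        + Complex.normSq (∑ kl ∈ antidiagonal m, (a kl.1 * (ρ:ℂ) ^ kl.1) * v kl.2)
        + Complex.normSq (∑ kl ∈ antidiagonal n, (a kl.1 * (ρ:ℂ) ^ kl.1) * v kl.2) := by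
    rw [Finset.sum_union (by
      simp only [Finset.disjoint_singleton_right, mem_range]
      omega)]
    rw [Finset.sum_singleton, Finset.sum_range_succ]
  have hLHS1 : ∑ i ∈ range m,
      Complex.normSq (∑ kl ∈ antidiagonal i, (a kl.1 * (ρ:ℂ) ^ kl.1) * v kl.2) = Q := by
    rw [hQ]
    exact Finset.sum_congr rfl (fun i hi => by rw [hWrow i (mem_range.mp hi)])
  have hWmSq : (‖w m‖ * e)^2
      ≤ Complex.normSq (∑ kl ∈ antidiagonal m, (a kl.1 * (ρ:ℂ) ^ kl.1) * v kl.2) := by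
    rw [hWm]
    have h1 : ‖ε * (e:ℝ) * (w 0 * (starRingEnd ℂ) (w m))‖ = e * ‖w 0‖ * ‖w m‖ := by
      rw [norm_mul, norm_mul, norm_mul, hepsn, one_mul, Complex.norm_real, Real.norm_eq_abs,
        _root_.abs_of_nonneg hepos.le, RCLike.norm_conj]
      ring
    have h2 : ‖w m‖ - e * ‖w 0‖ * ‖w m‖
        ≤ ‖w m + ε * (e:ℝ) * (w 0 * (starRingEnd ℂ) (w m))‖ := by
      have h3 := norm_sub_le (w m + ε * (e:ℝ) * (w 0 * (starRingEnd ℂ) (w m)))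
        (ε * (e:ℝ) * (w 0 * (starRingEnd ℂ) (w m)))
      rw [add_sub_cancel_right, h1] at h3
      linarith
    have h3 : ‖w 0‖ = a0 := by rw [ha0, hw, atl_norm a hρ0, pow_zero, mul_one]
    have h4 : ‖w m‖ * e ≤ ‖w m‖ - e * ‖w 0‖ * ‖w m‖ := by
      rw [h3]
      have expand : ‖w m‖ - e * a0 * ‖w m‖ = ‖w m‖ * (1 - e * a0) := by ring
      rw [expand, he1]
    have hXn : Complex.normSq (w m + ε * (e:ℝ) * (w 0 * (starRingEnd ℂ) (w m)))
        = ‖w m + ε * (e:ℝ) * (w 0 * (starRingEnd ℂ) (w m))‖^2 := by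
      rw [← Complex.sq_norm]
    rw [hXn]
    nlinarith [h2, h4, norm_nonneg (w m + ε * (e:ℝ) * (w 0 * (starRingEnd ℂ) (w m))),
      mul_nonneg (norm_nonneg (w m)) hepos.le]
  have hWnSq : Complex.normSq (∑ kl ∈ antidiagonal n, (a kl.1 * (ρ:ℂ) ^ kl.1) * v kl.2)
      = (‖w n‖ + (Q + e*γ))^2 := by
    rw [hWn, hε, ← Complex.sq_norm,
      norm_add_eps _ _ (by positivity)]
  have hRHS : ∑ j ∈ range (n+1), Complex.normSq (v j) = 1 + (Q + e^2*γ) := by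
    have hpt : ∀ j ∈ range (n+1), Complex.normSq (v j)
        = (if j = 0 then (1:ℝ) else 0)
          + ((if m+1 ≤ j ∧ j ≤ n then Complex.normSq (w (n-j)) else 0)
            + (if j = m then e^2 * Complex.normSq (w m) else 0)) := by
      intro j hj
      have hj' : j < n + 1 := mem_range.mp hj
      by_cases hj0 : j = 0
      · rw [hveq, if_pos hj0, if_neg (show ¬ (m+1 ≤ j ∧ j ≤ n) by omega),
          if_neg (show ¬ (j = m) by omega), mul_zero, mul_zero, add_zero, add_zero,
          if_pos hj0, if_neg (show ¬ (m+1 ≤ j ∧ j ≤ n) by omega),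
          if_neg (show ¬ (j = m) by omega)]
        simp
      · by_cases hjm : m+1 ≤ j ∧ j ≤ n
        · rw [hveq, if_neg hj0, if_pos hjm, if_neg (show ¬ (j = m) by omega), mul_zero,
            add_zero, zero_add, if_neg hj0, if_pos hjm, if_neg (show ¬ (j = m) by omega),
            add_zero, zero_add]
          rw [Complex.normSq_mul, Complex.normSq_conj]
          have hepsSq : Complex.normSq ε = 1 := by
            rw [hε, ← Complex.sq_norm, norm_eps, one_pow]
          rw [hepsSq, one_mul]
        · by_cases hjm2 : j = m
          · rw [hveq, if_neg hj0, if_neg hjm, if_pos hjm2, mul_zero, add_zero, zero_add,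
              if_neg hj0, if_neg hjm, if_pos hjm2, zero_add, zero_add]
            rw [Complex.normSq_mul, Complex.normSq_mul, Complex.normSq_conj,
              Complex.normSq_ofReal]
            have hepsSq : Complex.normSq ε = 1 := by
              rw [hε, ← Complex.sq_norm, norm_eps, one_pow]
            rw [hepsSq]
            ring
          · rw [hveq, if_neg hj0, if_neg hjm, if_neg hjm2, mul_zero, mul_zero, add_zero,
              add_zero, if_neg hj0, if_neg hjm, if_neg hjm2]
            simp
    rw [Finset.sum_congr rfl hpt, Finset.sum_add_distrib]
    congr 1
    · rw [Finset.sum_ite_eq' (range (n+1)) 0 (fun _ => (1:ℝ))]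
      exact if_pos (mem_range.mpr (by omega))
    · rw [Finset.sum_add_distrib]
      rw [sum_range_reflect_ite (fun k => Complex.normSq (w k)) m n (by omega)]
      rw [Finset.sum_ite_eq' (range (n+1)) m (fun _ => e^2 * Complex.normSq (w m))]
      rw [if_pos (mem_range.mpr (by omega))]
      rw [hQ, hγ, show n - m = m by omega]
  rw [hsplitS, hLHS1, hWnSq, hRHS] at hBes
  have hγm : γ = ‖w m‖^2 := by
    rw [hγ, ← Complex.sq_norm]
  have hsq : (‖w n‖ + (Q + e*γ))^2 ≤ 1 := by
    have hee : (‖w m‖*e)^2 = e^2*γ := by rw [hγm]; ring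
    nlinarith [hBes, hWmSq]
  have hle1 : ‖w n‖ + (Q + e*γ) ≤ 1 :=
    sq_le_one_of_le_one (by positivity) hsq
  calc ‖a n‖ * ρ^n + ∑ k ∈ range m, (‖a k‖ * ρ^k)^2 + (‖a m‖ * ρ^m)^2 / (1 + ‖a 0‖)
      = ‖w n‖ + (Q + e*γ) := by
        rw [hw, atl_norm a hρ0, hQ, hγ, atl_nsq a hρ0, he, ← ha0]
        have : ∑ k ∈ range m, (‖a k‖ * ρ^k)^2 = ∑ k ∈ range m, Complex.normSq (atl a ρ k) :=
          Finset.sum_congr rfl (fun k _ => (atl_nsq a hρ0 k).symm)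
        rw [this]
        rw [div_eq_mul_inv, one_div]
        ring
    _ ≤ 1 := hle1


/-- take ρ → 1 in a polynomial inequality -/
lemma limit_rho (F : ℝ → ℝ) (hFc : Continuous F) (hF : ∀ ρ, 0 ≤ ρ → ρ < 1 → F ρ ≤ 1) :
    F 1 ≤ 1 := by
  have hne : (𝓝[<] (1:ℝ)).NeBot := inferInstance
  have htd : Tendsto F (𝓝[<] (1:ℝ)) (𝓝 (F 1)) :=
    (hFc.tendsto 1).mono_left nhdsWithin_le_nhds
  apply le_of_tendsto htd
  have h0 : ∀ᶠ ρ in 𝓝[<] (1:ℝ), (0:ℝ) < ρ :=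
    eventually_nhdsWithin_of_eventually_nhds (eventually_gt_nhds (by norm_num))
  have h1 : ∀ᶠ ρ in 𝓝[<] (1:ℝ), ρ < 1 := eventually_mem_nhdsWithin
  filter_upwards [h0, h1] with ρ hρ0 hρ1
  exact hF ρ hρ0.le hρ1

lemma coeffC_odd_one (f : ℂ → ℂ) (a : ℕ → ℂ)
    (hf : ∀ z : ℂ, ‖z‖ < 1 → HasSum (fun k : ℕ => a k * z ^ k) (f z))
    (hb : ∀ z : ℂ, ‖z‖ < 1 → ‖f z‖ ≤ 1) (m : ℕ) :
    ‖a (2*m+1)‖ + ∑ k ∈ range (m+1), ‖a k‖^2 ≤ 1 := by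
  have hF : Continuous (fun ρ : ℝ => ‖a (2*m+1)‖ * ρ^(2*m+1) + ∑ k ∈ range (m+1), (‖a k‖ * ρ^k)^2) := by
    continuity
  have := limit_rho _ hF (fun ρ h0 h1 => coeffC_odd f a hf hb h0 h1 m)
  simpa using this

lemma coeffC_even_one (f : ℂ → ℂ) (a : ℕ → ℂ)
    (hf : ∀ z : ℂ, ‖z‖ < 1 → HasSum (fun k : ℕ => a k * z ^ k) (f z))
    (hb : ∀ z : ℂ, ‖z‖ < 1 → ‖f z‖ ≤ 1) (m : ℕ) (hm : 1 ≤ m) :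
    ‖a (2*m)‖ + ∑ k ∈ range m, ‖a k‖^2 + ‖a m‖^2 / (1 + ‖a 0‖) ≤ 1 := by
  have hF : Continuous (fun ρ : ℝ => ‖a (2*m)‖ * ρ^(2*m) + ∑ k ∈ range m, (‖a k‖ * ρ^k)^2
      + (‖a m‖ * ρ^m)^2 / (1 + ‖a 0‖)) := by
    apply Continuous.add
    · continuity
    · apply Continuous.div_const
      continuity
  have := limit_rho _ hF (fun ρ h0 h1 => coeffC_even f a hf hb h0 h1 m hm)
  simpa using this

/-- master coefficient inequality -/
lemma master (f : ℂ → ℂ) (a : ℕ → ℂ)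
    (hf : ∀ z : ℂ, ‖z‖ < 1 → HasSum (fun k : ℕ => a k * z ^ k) (f z))
    (hb : ∀ z : ℂ, ‖z‖ < 1 → ‖f z‖ ≤ 1) (n : ℕ) (hn : 1 ≤ n) :
    ‖a n‖ + (∑ k ∈ Ico 1 ((n+1)/2), ‖a k‖^2
      + (if n % 2 = 0 then ‖a (n/2)‖^2 / (1 + ‖a 0‖) else 0))
    ≤ 1 - ‖a 0‖^2 := by
  rcases Nat.even_or_odd n with he | ho
  · obtain ⟨m, hm⟩ := he
    have hm1 : 1 ≤ m := by omega
    have h := coeffC_even_one f a hf hb m hm1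
    have hsplit : ∑ k ∈ range m, ‖a k‖^2 = ‖a 0‖^2 + ∑ k ∈ Ico 1 m, ‖a k‖^2 := by
      rw [Finset.range_eq_Ico, Finset.sum_eq_sum_Ico_succ_bot (by omega : 0 < m)]
    have e1 : (n+1)/2 = m := by omega
    have e2 : n/2 = m := by omega
    have e3 : n % 2 = 0 := by omega
    rw [e1, e2, if_pos e3, show n = 2*m by omega]
    rw [hsplit] at h
    linarith
  · obtain ⟨m, hm⟩ := ho
    have h := coeffC_odd_one f a hf hb m
    have hsplit : ∑ k ∈ range (m+1), ‖a k‖^2 = ‖a 0‖^2 + ∑ k ∈ Ico 1 (m+1), ‖a k‖^2 := by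
      rw [Finset.range_eq_Ico, Finset.sum_eq_sum_Ico_succ_bot (by omega : 0 < m+1)]
    have e1 : (n+1)/2 = m+1 := by omega
    have e3 : ¬ (n % 2 = 0) := by omega
    rw [e1, if_neg e3, show n = 2*m+1 by omega]
    rw [hsplit] at h
    linarith


lemma sum_range_ite_lt (x : ℕ → ℝ) (M N : ℕ) (hMN : M ≤ N + 1) :
    ∑ j ∈ range N, (if j + 1 < M then x j else 0) = ∑ j ∈ range (M-1), x j := by
  have hsub : range (M-1) ⊆ range N := Finset.range_subset_range.mpr (by omega)
  rw [← Finset.sum_subset hsub (fun j hj hj' => by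
    rw [if_neg (fun hc => hj' (mem_range.mpr (by omega)))])]
  exact Finset.sum_congr rfl (fun j hj => if_pos (by
    have := mem_range.mp hj; omega))

theorem final (f : ℂ → ℂ) (a : ℕ → ℂ)
    (hf : ∀ z : ℂ, ‖z‖ < 1 → HasSum (fun k : ℕ => a k * z ^ k) (f z))
    (hb : ∀ z : ℂ, ‖z‖ < 1 → ‖f z‖ ≤ 1) (r : ℝ) (hr0 : 0 ≤ r) (hr1 : r < 1) :
    (∑' k : ℕ, ‖a (k + 1)‖ * r ^ (k + 1)) +
      (1 / (1 + ‖a 0‖) + r / (1 - r)) *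
        ∑' k : ℕ, ‖a (k + 1)‖ ^ 2 * r ^ (2 * (k + 1)) ≤
      r / (1 - r) * (1 - ‖a 0‖ ^ 2) := by
  set a0 : ℝ := ‖a 0‖ with ha0
  have ha0nn : (0:ℝ) ≤ a0 := norm_nonneg _
  set A : ℝ := 1 - a0^2 with hA
  set c : ℕ → ℝ := fun n => ‖a n‖ with hc
  have hcnn : ∀ n, 0 ≤ c n := fun n => norm_nonneg _
  set bet : ℕ → ℝ := fun n => (∑ k ∈ Ico 1 ((n+1)/2), c k^2)
      + (if n % 2 = 0 then c (n/2)^2 / (1 + a0) else 0) with hbet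
  have hbet_nn : ∀ n, 0 ≤ bet n := by
    intro n
    apply add_nonneg (Finset.sum_nonneg (fun k _ => sq_nonneg _))
    split_ifs
    · positivity
    · exact le_rfl
  have hmaster : ∀ n, 1 ≤ n → c n + bet n ≤ A := fun n hn => master f a hf hb n hn
  have hA1 : A ≤ 1 := by rw [hA]; nlinarith [sq_nonneg a0]
  have hc_le : ∀ n, 1 ≤ n → c n ≤ 1 := by
    intro n hn
    have := hmaster n hn
    have := hbet_nn n
    linarith
  have hbet_le : ∀ n, 1 ≤ n → bet n ≤ 1 := by
    intro n hn
    have := hmaster n hn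
    have := hcnn n
    linarith
  -- summabilities
  have hr2 : (0:ℝ) ≤ r^2 := sq_nonneg r
  have hr21 : r^2 < 1 := by nlinarith
  have hgeom : Summable (fun k : ℕ => r ^ (k+1)) := by
    have := (summable_geometric_of_lt_one hr0 hr1).mul_right r
    apply Summable.congr this
    intro k
    rw [pow_succ]
  have hgeom2 : Summable (fun k : ℕ => r ^ (2*(k+1))) := by
    have := (summable_geometric_of_lt_one hr2 hr21).mul_right (r^2)
    apply Summable.congr this
    intro k
    rw [← pow_succ, ← pow_mul]
  have hS1 : Summable (fun k : ℕ => c (k+1) * r^(k+1)) := by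
    apply Summable.of_nonneg_of_le (fun k => by positivity) _ hgeom
    intro k
    calc c (k+1) * r^(k+1) ≤ 1 * r^(k+1) :=
          mul_le_mul_of_nonneg_right (hc_le (k+1) (by omega)) (by positivity)
      _ = r^(k+1) := one_mul _
  have hS2 : Summable (fun k : ℕ => c (k+1)^2 * r^(2*(k+1))) := by
    apply Summable.of_nonneg_of_le (fun k => by positivity) _ hgeom2
    intro k
    have h1 : c (k+1)^2 ≤ 1 := by
      have := hc_le (k+1) (by omega)
      nlinarith [hcnn (k+1)]
    calc c (k+1)^2 * r^(2*(k+1)) ≤ 1 * r^(2*(k+1)) :=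
          mul_le_mul_of_nonneg_right h1 (by positivity)
      _ = r^(2*(k+1)) := one_mul _
  have hSbet : Summable (fun k : ℕ => bet (k+1) * r^(k+1)) := by
    apply Summable.of_nonneg_of_le (fun k => by positivity) _ hgeom
    intro k
    calc bet (k+1) * r^(k+1) ≤ 1 * r^(k+1) :=
          mul_le_mul_of_nonneg_right (hbet_le (k+1) (by omega)) (by positivity)
      _ = r^(k+1) := one_mul _
  set S2 : ℝ := ∑' k : ℕ, c (k+1)^2 * r^(2*(k+1)) with hS2def
  have hS2nn : 0 ≤ S2 := tsum_nonneg (fun k => by positivity)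
  -- even part identity
  have heven : (∑' k : ℕ, ((if (k+1) % 2 = 0 then c ((k+1)/2)^2 / (1+a0) else 0) * r^(k+1)))
      = (1/(1+a0)) * S2 := by
    set f2 : ℕ → ℝ := fun k => (if (k+1) % 2 = 0 then c ((k+1)/2)^2 / (1+a0) else 0) * r^(k+1)
      with hf2
    have hodd0 : ∀ j, f2 (2*j) = 0 := by
      intro j
      simp only [hf2]
      have : ¬ ((2*j+1) % 2 = 0) := by omega
      simp [this]
    have heven1 : ∀ j, f2 (2*j+1) = (1/(1+a0)) * (c (j+1)^2 * r^(2*(j+1))) := by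
      intro j
      simp only [hf2]
      have h1 : (2*j+1+1) % 2 = 0 := by omega
      have h2 : (2*j+1+1)/2 = j+1 := by omega
      rw [if_pos h1, h2, show 2*j+1+1 = 2*(j+1) by ring]
      ring
    have hsum_even : Summable (fun j => f2 (2*j)) := by
      apply Summable.congr summable_zero
      intro j
      rw [hodd0]
    have hsum_odd : Summable (fun j => f2 (2*j+1)) := by
      apply Summable.congr (hS2.mul_left (1/(1+a0)))
      intro j
      rw [heven1]
    have := tsum_even_add_odd hsum_even hsum_odd
    rw [← this]
    have e1 : ∑' j, f2 (2*j) = 0 := by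
      calc ∑' j, f2 (2*j) = ∑' _ : ℕ, (0:ℝ) := tsum_congr hodd0
        _ = 0 := tsum_zero
    have e2 : ∑' j, f2 (2*j+1) = (1/(1+a0)) * S2 := by
      rw [tsum_congr heven1, tsum_mul_left]
    rw [e1, e2, zero_add]
  -- odd (tail) part identity
  set G : ℕ → ℕ → ℝ := fun k j => if 2*j+2 ≤ k then c (j+1)^2 * r^(k+1) else 0 with hG
  have hGnn : ∀ k j, 0 ≤ G k j := by
    intro k j
    simp only [hG]
    split_ifs
    · positivity
    · exact le_rfl
  have hGk : ∀ k, Summable (fun j => G k j) := by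
    intro k
    apply summable_of_ne_finset_zero (s := range ((k+2)/2))
    intro j hj
    simp only [hG]; rw [if_neg (by simp only [mem_range] at hj; omega)]
  have hGksum : ∀ k, (∑' j, G k j) = (∑ kk ∈ Ico 1 ((k+2)/2), c kk^2) * r^(k+1) := by
    intro k
    rw [tsum_eq_sum (s := range ((k+2)/2)) (fun j hj => by
      simp only [hG]; rw [if_neg (by simp only [mem_range] at hj; omega)])]
    rw [Finset.sum_Ico_eq_sum_range]
    rw [Finset.sum_mul]
    have hcond : ∀ j ∈ range ((k+2)/2), G k j = (if j + 1 < (k+2)/2 then c (j+1)^2 * r^(k+1) else 0) := by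
      intro j hj
      simp only [hG]
      by_cases hc2 : 2*j+2 ≤ k
      · rw [if_pos hc2, if_pos (by omega)]
      · rw [if_neg hc2, if_neg (by omega)]
    rw [Finset.sum_congr rfl hcond]
    rw [sum_range_ite_lt (fun j => c (j+1)^2 * r^(k+1)) ((k+2)/2) ((k+2)/2) (by omega)]
    apply Finset.sum_congr
    · congr 1
    · intro j hj
      rw [add_comm 1 j]
  have hGj : ∀ j, Summable (fun k => G k j) := by
    intro j
    apply Summable.of_nonneg_of_le (hGnn · j) _ (hgeom.mul_left (c (j+1)^2))
    intro k
    simp only [hG]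
    split_ifs
    · exact le_rfl
    · positivity
  have hGjsum : ∀ j, (∑' k, G k j) = (r/(1-r)) * (c (j+1)^2 * r^(2*(j+1))) := by
    intro j
    have hzero : ∀ k ∈ range (2*j+2), G k j = 0 := by
      intro k hk
      simp only [hG]; rw [if_neg (by simp only [mem_range] at hk; omega)]
    have := Summable.sum_add_tsum_nat_add (f := fun k => G k j) (2*j+2) (hGj j)
    rw [Finset.sum_eq_zero hzero, zero_add] at this
    rw [← this]
    have hterm : ∀ i : ℕ, G (i + (2*j+2)) j = (c (j+1)^2 * r^(2*(j+1))) * r^(i+1) := by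
      intro i
      simp only [hG]; rw [if_pos (by omega)]
      rw [show i + (2*j+2) + 1 = (2*(j+1)) + (i+1) by ring, pow_add]
      ring
    rw [tsum_congr hterm, tsum_mul_left]
    have : (∑' i : ℕ, r^(i+1)) = r / (1-r) := by
      have h1 : (∑' i : ℕ, r^(i+1)) = (∑' i : ℕ, r^i) * r := by
        rw [← tsum_mul_right]
        exact tsum_congr (fun i => by rw [pow_succ])
      rw [h1, tsum_geometric_of_lt_one hr0 hr1]
      rw [inv_mul_eq_div]
    rw [this]
    ring
  have hGuncurry : Summable (Function.uncurry (fun k j => G k j)) := by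
    apply (summable_prod_of_nonneg (f := Function.uncurry (fun k j => G k j))
      (fun p => hGnn p.1 p.2)).mpr
    constructor
    · exact hGk
    · apply Summable.of_nonneg_of_le (fun k => tsum_nonneg (fun j => hGnn k j)) _ hgeom
      intro k
      rw [hGksum]
      have hb1 : (∑ kk ∈ Ico 1 ((k+2)/2), c kk^2) ≤ 1 := by
        have h := hbet_le (k+1) (by omega)
        simp only [hbet] at h
        have h2 : (0:ℝ) ≤ (if (k+1) % 2 = 0 then c ((k+1)/2)^2 / (1 + a0) else 0) := by
          split_ifs
          · positivity
          · exact le_rfl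
        have e : (k+1+1)/2 = (k+2)/2 := by omega
        rw [e] at h
        linarith
      calc (∑ kk ∈ Ico 1 ((k+2)/2), c kk^2) * r^(k+1) ≤ 1 * r^(k+1) :=
            mul_le_mul_of_nonneg_right hb1 (by positivity)
        _ = r^(k+1) := one_mul _
  have hodd : (∑' k : ℕ, (∑ kk ∈ Ico 1 ((k+2)/2), c kk^2) * r^(k+1)) = (r/(1-r)) * S2 := by
    have hcomm := Summable.tsum_comm' hGuncurry hGk hGj
    -- hcomm : ∑' j, ∑' k ... = ∑' k, ∑' j ... (check direction)
    rw [tsum_congr (fun k => (hGksum k).symm)]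
    rw [← hcomm]
    rw [tsum_congr hGjsum, tsum_mul_left]
  -- assemble the bet identity
  have hbet_id : (∑' k : ℕ, bet (k+1) * r^(k+1)) = (1/(1+a0) + r/(1-r)) * S2 := by
    have hterm : ∀ k : ℕ, bet (k+1) * r^(k+1)
        = (∑ kk ∈ Ico 1 ((k+2)/2), c kk^2) * r^(k+1)
          + ((if (k+1) % 2 = 0 then c ((k+1)/2)^2 / (1+a0) else 0) * r^(k+1)) := by
      intro k
      simp only [hbet]
      have e : (k+1+1)/2 = (k+2)/2 := by omega
      rw [e, add_mul]
    rw [tsum_congr hterm]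
    rw [Summable.tsum_add ?s1 ?s2]
    · rw [hodd, heven]
      ring
    case s1 =>
      apply Summable.of_nonneg_of_le (fun k => by positivity) _ hgeom
      intro k
      have hb1 : (∑ kk ∈ Ico 1 ((k+2)/2), c kk^2) ≤ 1 := by
        have h := hbet_le (k+1) (by omega)
        simp only [hbet] at h
        have h2 : (0:ℝ) ≤ (if (k+1) % 2 = 0 then c ((k+1)/2)^2 / (1 + a0) else 0) := by
          split_ifs
          · positivity
          · exact le_rfl
        have e : (k+1+1)/2 = (k+2)/2 := by omega
        rw [e] at h
        linarith
      calc (∑ kk ∈ Ico 1 ((k+2)/2), c kk^2) * r^(k+1) ≤ 1 * r^(k+1) :=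
            mul_le_mul_of_nonneg_right hb1 (by positivity)
        _ = r^(k+1) := one_mul _
    case s2 =>
      apply Summable.of_nonneg_of_le (fun k => by positivity) _ hgeom
      intro k
      have h2 : (if (k+1) % 2 = 0 then c ((k+1)/2)^2 / (1 + a0) else 0) ≤ 1 := by
        split_ifs with hsw
        · have h3 := hc_le ((k+1)/2) (by omega)
          have h4 : c ((k+1)/2)^2 ≤ 1 := by nlinarith [hcnn ((k+1)/2)]
          have h5 : (0:ℝ) < 1 + a0 := by linarith
          rw [div_le_one h5]
          linarith
        · norm_num
      calc _ ≤ 1 * r^(k+1) := mul_le_mul_of_nonneg_right h2 (by positivity)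
        _ = r^(k+1) := one_mul _
  -- final chain
  have hfinal : (∑' k : ℕ, c (k+1) * r^(k+1)) + (∑' k : ℕ, bet (k+1) * r^(k+1))
      ≤ A * (r/(1-r)) := by
    have hterm : ∀ k : ℕ, c (k+1) * r^(k+1) + bet (k+1) * r^(k+1) ≤ A * r^(k+1) := by
      intro k
      have := hmaster (k+1) (by omega)
      nlinarith [pow_nonneg hr0 (k+1)]
    calc (∑' k : ℕ, c (k+1) * r^(k+1)) + (∑' k : ℕ, bet (k+1) * r^(k+1))
        = ∑' k : ℕ, (c (k+1) * r^(k+1) + bet (k+1) * r^(k+1)) := (Summable.tsum_add hS1 hSbet).symm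
      _ ≤ ∑' k : ℕ, A * r^(k+1) := Summable.tsum_le_tsum hterm (hS1.add hSbet) (hgeom.mul_left A)
      _ = A * (r/(1-r)) := by
          rw [tsum_mul_left]
          congr 1
          have h1 : (∑' i : ℕ, r^(i+1)) = (∑' i : ℕ, r^i) * r := by
            rw [← tsum_mul_right]
            exact tsum_congr (fun i => by rw [pow_succ])
          rw [h1, tsum_geometric_of_lt_one hr0 hr1, inv_mul_eq_div]
  rw [← hbet_id]
  calc (∑' k : ℕ, c (k+1) * r^(k+1)) + (∑' k : ℕ, bet (k+1) * r^(k+1))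
      ≤ A * (r/(1-r)) := hfinal
    _ = r / (1-r) * (1 - a0^2) := by rw [hA]; ring


end RefinedBohr

/-- Refined Bohr inequality (Theorem B). -/
theorem refined_bohr (f : ℂ → ℂ) (a : ℕ → ℂ)
    (hf : ∀ z : ℂ, ‖z‖ < 1 → HasSum (fun k : ℕ => a k * z ^ k) (f z))
    (hb : ∀ z : ℂ, ‖z‖ < 1 → ‖f z‖ ≤ 1)
    (r : ℝ) (hr0 : 0 ≤ r) (hr1 : r < 1) :
    (∑' k : ℕ, ‖a (k + 1)‖ * r ^ (k + 1)) +
      (1 / (1 + ‖a 0‖) + r / (1 - r)) *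
        ∑' k : ℕ, ‖a (k + 1)‖ ^ 2 * r ^ (2 * (k + 1)) ≤
      r / (1 - r) * (1 - ‖a 0‖ ^ 2) := by
  exact RefinedBohr.final f a hf hb r hr0 hr1
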